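/- Let M be a matroid on a finite ground set E and let B₁, …, Bₙ be a pinned broken line shelling of the bases of M. Then for every element e ∈ E that is not a loop of M and satisfies e ∉ B₁, there is exactly one index i with restriction set R(B_i) = {e}; conversely, whenever R(B_i) is a singleton {e}, the element e is not a loop of M and e ∉ B₁. (Lemma 6.7 (lem:coveredAtoms), first part: the atoms of the restriction set poset are in bijection with the non-loop elements of E not in B₁.) -/

import Mathlib

/-!
STATEMENT 11 (Lemma `lem:coveredAtoms`, first part): in a pinned broken line
shelling `B₁, …, Bₙ` of the bases of `M`, the indices whose restriction set is
a singleton `{e}` are in bijection with the non-loop elements `e ∉ B₁`: every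
non-loop `e ∉ B₁` is the restriction set of exactly one basis, and every
singleton restriction set `{e}` has `e` a non-loop with `e ∉ B₁`.
(An element `e` is a loop iff `{e}` is not independent.)
-/

open scoped BigOperators

/-- The `ℓ`-weight of a set `A ⊆ E`. -/
noncomputable def wt {α : Type*} (ℓ : α → ℝ) (A : Set α) : ℝ := ∑ᶠ e ∈ A, ℓ e

lemma wt_eq_sum {α : Type*} [Fintype α] (ℓ : α → ℝ) (A : Set α) :
    wt ℓ A = ∑ x ∈ (Set.toFinite A).toFinset, ℓ x := by
  rw [wt, ← finsum_mem_coe_finset, Set.Finite.coe_toFinset]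

lemma wt_exchange {α : Type*} [Fintype α] (ℓ : α → ℝ) {A : Set α} {a b : α}
    (ha : a ∈ A) (hb : b ∉ A) :
    wt ℓ (insert b (A \ {a})) = wt ℓ A - ℓ a + ℓ b := by
  classical
  rw [wt_eq_sum, wt_eq_sum]
  have h1 : (Set.toFinite (insert b (A \ {a}))).toFinset
      = insert b ((Set.toFinite A).toFinset.erase a) := by
    ext z
    simp only [Set.Finite.mem_toFinset, Finset.mem_insert, Finset.mem_erase,
      Set.mem_insert_iff, Set.mem_diff, Set.mem_singleton_iff]
    tauto
  rw [h1, Finset.sum_insert (by simp only [Finset.mem_erase, Set.Finite.mem_toFinset]; tauto)]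
  rw [Finset.sum_erase_eq_sub (by simpa using ha)]
  ring

lemma coexchange {α : Type*} {M : Matroid α} (hE : M.E = Set.univ) {B B' : Set α}
    (hB : M.IsBase B) (hB' : M.IsBase B') {y : α} (hy : y ∈ B' \ B) :
    ∃ x ∈ B \ B', M.IsBase (insert y (B \ {x})) := by
  have hcomp : ∀ {C : Set α}, M.IsBase C → M✶.IsBase Cᶜ := by
    intro C hC
    rw [Matroid.dual_isBase_iff (by rw [hE]; exact Set.subset_univ _)]
    have h : M.E \ Cᶜ = C := by rw [hE, ← Set.compl_eq_univ_diff, compl_compl]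
    rwa [h]
  have h1 := hcomp hB
  have h2 := hcomp hB'
  have hy' : y ∈ Bᶜ \ B'ᶜ := ⟨hy.2, fun h => h hy.1⟩
  obtain ⟨x, hx, hbase⟩ := h1.exchange h2 hy'
  have hxB : x ∈ B := not_not.mp hx.2
  have hxy : x ≠ y := fun h => hy.2 (h ▸ hxB)
  refine ⟨x, ⟨hxB, hx.1⟩, ?_⟩
  have hset : insert x (Bᶜ \ {y}) = (insert y (B \ {x}))ᶜ := by
    ext z
    simp only [Set.mem_insert_iff, Set.mem_compl_iff, Set.mem_diff, Set.mem_singleton_iff]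
    constructor
    · rintro (rfl | ⟨hz, hzy⟩) <;> rintro (rfl | ⟨hzB, hzx⟩) <;> tauto
    · intro h
      push_neg at h
      by_cases hzx : z = x
      · exact Or.inl hzx
      · exact Or.inr ⟨fun hzB => hzx (h.2 hzB), h.1⟩
  rw [hset] at hbase
  have := (Matroid.dual_isBase_iff (by rw [hE]; exact Set.subset_univ _)).mp hbase
  rwa [hE, ← Set.compl_eq_univ_diff, compl_compl] at this

lemma keyG {α : Type*} [Fintype α] {M : Matroid α} {ℓ : α → ℝ}
    (hinj : Function.Injective ℓ) {S G : Set α} (hG : M.IsBase G) (hSG : S ⊆ G)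
    (hmin : ∀ C, M.IsBase C → S ⊆ C → C ≠ G → wt ℓ G < wt ℓ C)
    {x : α} (hx : x ∉ G)
    (hI : M.Indep (S ∪ {g ∈ G | ℓ g < ℓ x} ∪ {x})) : False := by
  set I := S ∪ {g ∈ G | ℓ g < ℓ x} ∪ {x} with hIdef
  obtain ⟨G', hG', hIG', hG'sub⟩ := hI.exists_isBase_subset_union_isBase hG
  have hxI : x ∈ I := Or.inr rfl
  have hxG' : x ∈ G' := hIG' hxI
  have hG'union : G' ⊆ insert x G := by
    intro z hz
    rcases hG'sub hz with h | h
    · rcases h with h | h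
      · rcases h with h | h
        · exact Or.inr (hSG h)
        · exact Or.inr h.1
      · exact Or.inl h
    · exact Or.inr h
  have hdiff1 : G' \ G = {x} := by
    apply subset_antisymm
    · rintro z ⟨hz1, hz2⟩
      rcases hG'union hz1 with h | h
      · exact h
      · exact absurd h hz2
    · rintro z rfl
      exact ⟨hxG', hx⟩
  have hcard : (G \ G').ncard = 1 := by
    rw [hG.ncard_diff_comm hG', hdiff1, Set.ncard_singleton]
  obtain ⟨g', hg'⟩ := Set.ncard_eq_one.mp hcard
  have hg'mem : g' ∈ G \ G' := by rw [hg']; rfl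
  have hg'I : g' ∉ I := fun h => hg'mem.2 (hIG' h)
  have hxg' : x ≠ g' := fun h => hx (h ▸ hg'mem.1)
  have hℓ : ℓ x < ℓ g' := by
    have h1 : ¬ ℓ g' < ℓ x := fun h => hg'I (Or.inl (Or.inr ⟨hg'mem.1, h⟩))
    have h2 : ℓ x ≠ ℓ g' := fun h => hxg' (hinj h)
    exact lt_of_le_of_ne (not_lt.mp h1) h2
  have hG'eq : G' = insert x (G \ {g'}) := by
    ext z
    constructor
    · intro hz
      rcases hG'union hz with h | h
      · exact Or.inl h
      · refine Or.inr ⟨h, fun hzg => ?_⟩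
        rw [Set.mem_singleton_iff] at hzg
        exact hg'mem.2 (hzg ▸ hz)
    · rintro (rfl | ⟨hzG, hzg⟩)
      · exact hxG'
      · by_contra hzG'
        have : z ∈ G \ G' := ⟨hzG, hzG'⟩
        rw [hg'] at this
        exact hzg this
  have hwt : wt ℓ G' = wt ℓ G - ℓ g' + ℓ x := by
    rw [hG'eq]; exact wt_exchange ℓ hg'mem.1 hx
  have hSG' : S ⊆ G' := fun s hs => hIG' (Or.inl (Or.inl hs))
  have hne : G' ≠ G := fun h => hx (h ▸ hxG')
  have := hmin G' hG' hSG' hne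
  rw [hwt] at this
  linarith

/-- Every basis `B ⊇ S` other than the `ℓ`-min basis `G ⊇ S` has a weight-decreasing
exchange. -/
lemma keyL2 {α : Type*} [Fintype α] {M : Matroid α} (hE : M.E = Set.univ) {ℓ : α → ℝ}
    (hinj : Function.Injective ℓ) {S G : Set α} (hG : M.IsBase G) (hSG : S ⊆ G)
    (hmin : ∀ C, M.IsBase C → S ⊆ C → C ≠ G → wt ℓ G < wt ℓ C)
    {B : Set α} (hB : M.IsBase B) (hSB : S ⊆ B) (hne : B ≠ G) :
    ∃ x ∈ B \ G, ∃ y ∈ G \ B, M.IsBase (insert y (B \ {x})) ∧ ℓ y < ℓ x := by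
  have hGB : (G \ B).Nonempty := by
    rw [Set.diff_nonempty]
    exact fun h => hne (hG.eq_of_subset_isBase hB h).symm
  obtain ⟨y, hyGB, hymin⟩ := Set.exists_min_image (G \ B) ℓ (Set.toFinite _) hGB
  obtain ⟨x, hxBG, hbase⟩ := coexchange hE hB hG hyGB
  refine ⟨x, hxBG, y, hyGB, hbase, ?_⟩
  by_contra hnot
  push_neg at hnot
  have hxy : x ≠ y := fun h => hyGB.2 (h ▸ hxBG.1)
  have hlt : ℓ x < ℓ y := lt_of_le_of_ne hnot (fun h => hxy (hinj h))
  apply keyG hinj hG hSG hmin hxBG.2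
  apply hB.indep.subset
  intro z hz
  rcases hz with (h | h) | h
  · exact hSB h
  · by_contra hzB
    exact absurd (hymin z ⟨h.1, hzB⟩) (not_le.mpr (h.2.trans hlt))
  · exact h ▸ hxBG.1

/-- `ℓ` is generic for `M`. -/
def Generic {α : Type*} (M : Matroid α) (ℓ : α → ℝ) : Prop :=
  Function.Injective ℓ ∧
    ∀ ⦃B B' : Set α⦄, M.IsBase B → M.IsBase B' → B ≠ B' → wt ℓ B ≠ wt ℓ B'

/-- `B` enumerates (without repetition) all the bases of `M`. -/
def EnumeratesBases {α : Type*} (M : Matroid α) {n : ℕ} (B : Fin n → Set α) : Prop :=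
  Function.Injective B ∧ (∀ i, M.IsBase (B i)) ∧ ∀ C, M.IsBase C → ∃ i, B i = C

/-- The restriction set of the facet `F j` in the enumeration `F`. -/
def restrictionSet {α : Type*} {n : ℕ} (F : Fin n → Set α) (j : Fin n) : Set α :=
  {x | x ∈ F j ∧ ∃ i : Fin n, i < j ∧ F j \ {x} ⊆ F i}

theorem pinned_broken_line_atoms {α : Type*} [Fintype α]
    (M : Matroid α) (hE : M.E = Set.univ)
    {n : ℕ} (hn : 0 < n) (B : Fin n → Set α) (hB : EnumeratesBases M B)
    (ℓ : Fin n → α → ℝ) (hgen : ∀ i, Generic M (ℓ i))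
    (hwit : ∀ i j : Fin n, wt (ℓ i) (B j) < wt (ℓ i) (B i) ↔ j < i)
    (hpin : ∀ i : Fin n, ∀ C : Set α, M.IsBase C → C ≠ B ⟨0, hn⟩ →
      wt (ℓ i) (B ⟨0, hn⟩) < wt (ℓ i) C) :
    (∀ e : α, M.Indep {e} → e ∉ B ⟨0, hn⟩ →
      ∃! i : Fin n, restrictionSet B i = {e}) ∧
    (∀ (i : Fin n) (e : α), restrictionSet B i = {e} →
      M.Indep {e} ∧ e ∉ B ⟨0, hn⟩) := by
  obtain ⟨hBinj, hBbase, hBsurj⟩ := hB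
  -- the key step: every basis other than `B 0` has a restriction-set element outside `B 0`
  have key : ∀ i : Fin n, B i ≠ B ⟨0, hn⟩ →
      ∃ x, x ∈ B i \ B ⟨0, hn⟩ ∧ x ∈ restrictionSet B i := by
    intro i hne
    obtain ⟨x, hx, y, hy, hbase, hlt⟩ :=
      keyL2 hE (hgen i).1 (hBbase ⟨0, hn⟩) (Set.empty_subset _)
        (fun C hC _ hCne => hpin i C hC hCne) (hBbase i) (Set.empty_subset _) hne
    obtain ⟨j, hj⟩ := hBsurj _ hbase
    have hwtlt : wt (ℓ i) (B j) < wt (ℓ i) (B i) := by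
      rw [hj, wt_exchange (ℓ i) hx.1 hy.2]; linarith
    exact ⟨x, hx, hx.1, j, (hwit i j).mp hwtlt,
      by rw [hj]; exact fun z hz => Set.mem_insert_of_mem _ hz⟩
  constructor
  · -- existence and uniqueness
    intro e he heb0
    obtain ⟨C, hC, heC⟩ := he.exists_isBase_superset
    obtain ⟨i₀, hi₀⟩ := hBsurj C hC
    have hex : ({i : Fin n | e ∈ B i}).Nonempty := ⟨i₀, by rw [Set.mem_setOf_eq, hi₀]; exact heC rfl⟩
    obtain ⟨i, hei, him⟩ := Set.exists_min_image {i : Fin n | e ∈ B i}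
      (fun i : Fin n => (i : ℕ)) (Set.toFinite _) hex
    have hmin : ∀ j, j < i → e ∉ B j := by
      intro j hj hej
      exact absurd (him j hej) (not_le.mpr hj)
    -- the minimal index works
    have hmain : ∀ k : Fin n, e ∈ B k → (∀ j, j < k → e ∉ B j) →
        restrictionSet B k = {e} := by
      intro k hek hkmin
      have hne : B k ≠ B ⟨0, hn⟩ := fun h => heb0 (h ▸ hek)
      obtain ⟨x, hx, hxB, j, hji, hsub⟩ := key k hne
      have hxe : x = e := by
        by_contra hxe
        exact hkmin j hji (hsub ⟨hek, fun h => hxe (Set.mem_singleton_iff.mp h).symm⟩)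
      apply subset_antisymm
      · rintro z ⟨hzB, j', hj', hsub'⟩
        by_contra hze
        exact hkmin j' hj' (hsub' ⟨hek, fun h => hze (Set.mem_singleton_iff.mp h ▸ rfl)⟩)
      · rintro z rfl
        exact hxe ▸ ⟨hxB, j, hji, hsub⟩
    refine ⟨i, hmain i hei hmin, ?_⟩
    -- uniqueness
    intro k hRk
    have hek : e ∈ B k := (hRk ▸ (rfl : e ∈ ({e} : Set α)) : e ∈ restrictionSet B k).1
    have hkmin : ∀ j, j < k → e ∉ B j := by
      intro j hjk hej
      obtain ⟨m, hm, hmmin⟩ := Set.exists_min_image {m : Fin n | e ∈ B m}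
        (fun m : Fin n => wt (ℓ k) (B m)) (Set.toFinite _) ⟨j, hej⟩
      have hGbase := hBbase m
      have hminG : ∀ C, M.IsBase C → ({e} : Set α) ⊆ C → C ≠ B m →
          wt (ℓ k) (B m) < wt (ℓ k) C := by
        intro C hC heC' hCG
        obtain ⟨m', hm'⟩ := hBsurj C hC
        have h1 : wt (ℓ k) (B m) ≤ wt (ℓ k) C := by
          rw [← hm']
          exact hmmin m' (by rw [Set.mem_setOf_eq, hm']; exact heC' rfl)
        exact lt_of_le_of_ne h1 ((hgen k).2 hGbase hC (Ne.symm hCG))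
      have hBkG : B k ≠ B m := by
        intro h
        have h1 : wt (ℓ k) (B j) < wt (ℓ k) (B k) := (hwit k j).mpr hjk
        have h2 : wt (ℓ k) (B k) ≤ wt (ℓ k) (B j) := h ▸ hmmin j hej
        linarith
      obtain ⟨x, hx, y, hy, hbase, hlt⟩ :=
        keyL2 hE (hgen k).1 hGbase (Set.singleton_subset_iff.mpr hm) hminG (hBbase k)
          (Set.singleton_subset_iff.mpr hek) hBkG
      obtain ⟨j', hj'⟩ := hBsurj _ hbase
      have hwtlt : wt (ℓ k) (B j') < wt (ℓ k) (B k) := by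
        rw [hj', wt_exchange (ℓ k) hx.1 hy.2]; linarith
      have hxR : x ∈ restrictionSet B k := ⟨hx.1, j', (hwit k j').mp hwtlt,
        by rw [hj']; exact fun z hz => Set.mem_insert_of_mem _ hz⟩
      rw [hRk] at hxR
      exact hx.2 (Set.mem_singleton_iff.mp hxR ▸ hm)
    rcases lt_trichotomy k i with h | h | h
    · exact absurd hek (hmin k h)
    · exact h
    · exact absurd hei (hkmin i h)
  · -- second part
    intro i e hR
    have heR : e ∈ restrictionSet B i := hR ▸ (rfl : e ∈ ({e} : Set α))
    have hne : B i ≠ B ⟨0, hn⟩ := by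
      intro h
      obtain ⟨-, j, hj, -⟩ := heR
      have hi0 : i = ⟨0, hn⟩ := hBinj h
      rw [hi0] at hj
      exact absurd (Fin.lt_def.mp hj) (Nat.not_lt_zero _)
    obtain ⟨x, hx, hxR⟩ := key i hne
    rw [hR] at hxR
    have hxe : x = e := Set.mem_singleton_iff.mp hxR
    exact ⟨(hBbase i).indep.subset (Set.singleton_subset_iff.mpr heR.1),
      hxe ▸ hx.2⟩
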